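/- Let p/q = [a_1,…,a_n] be an irreducible fraction with 0 < p/q < 1, q odd, and a_1 ≥ 2, so that (q−p)/q = [1, a_1−1, a_2,…,a_n]. Let t_1,…,t_n be the signs defined from AT(p/q) and t'_1,…,t'_{n+1} the signs defined from AT((q−p)/q). Then t'_{i+1} = −t_i for every 1 ≤ i ≤ n. -/

import Mathlib

/-!
Ancestral triangles of continued fractions (Yamada / Farey diagrams),
following "Cluster variables and Alexander polynomials of 2-bridge knots".
-/

noncomputable section

open scoped BigOperators

attribute [local instance] Classical.propDecidable

namespace TwoBridge

/-- The continued fraction `[a₁,…,aₙ] = 1/(a₁ + 1/(a₂ + ⋯ + 1/aₙ))`. -/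
def cf : List ℕ → ℚ
  | [] => 0
  | a :: t => 1 / ((a : ℚ) + cf t)

/-- Partial sums `l_k = a₁ + ⋯ + a_k`. -/
def ell (a : List ℕ) (k : ℕ) : ℕ := (a.take k).sum

/-- The index of the fan containing the `i`-th triangle (1-based): the least `k` with
`i ≤ l_k − 1`.  Fan 1 consists of `T_1, …, T_{a₁−1}` and, for `k ≥ 2`, fan `k` consists of
`T_{l_{k−1}}, …, T_{l_k − 1}`. -/
def fanIdx (a : List ℕ) (i : ℕ) : ℕ := sInf {k | i < ell a k}

/-- The `i`-th triangle (1-based) of the ancestral triangle of `[a₁,…,aₙ]` is a *right*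
triangle iff it lies in an odd-indexed fan (first `a₁ − 1` triangles are right, the next
`a₂` left, the next `a₃` right, and so on alternately). -/
def isRight (a : List ℕ) (i : ℕ) : Prop := Odd (fanIdx a i)

/-- Vertex indices of the ancestral triangle: `0 ↦ 0/1`, `1 ↦ 1/1`, and `j + 1 ↦` the apex
(new vertex) of the triangle `T_j`.  `edgeIdx a i` is the pair of vertex indices
(left endpoint, right endpoint) of the most recently created edge after stacking `i`
triangles; the triangle `T_{i+1}` is stacked on this edge. -/
def edgeIdx (a : List ℕ) : ℕ → ℕ × ℕ
  | 0 => (0, 1)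
  | i + 1 => if isRight a (i + 1) then ((edgeIdx a i).1, i + 2) else (i + 2, (edgeIdx a i).2)

/-- The labels (numerator, denominator) of the endpoints of the active edge after stacking
`i` triangles; the new vertex of each triangle is labelled by the mediant of the two
endpoints of the edge it is stacked on. -/
def edgeLbl (a : List ℕ) : ℕ → (ℕ × ℕ) × (ℕ × ℕ)
  | 0 => ((0, 1), (1, 1))
  | i + 1 =>
      if isRight a (i + 1) then
        ((edgeLbl a i).1,
          ((edgeLbl a i).1.1 + (edgeLbl a i).2.1, (edgeLbl a i).1.2 + (edgeLbl a i).2.2))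
      else
        (((edgeLbl a i).1.1 + (edgeLbl a i).2.1, (edgeLbl a i).1.2 + (edgeLbl a i).2.2),
          (edgeLbl a i).2)

/-- The label (numerator, denominator) of the vertex with index `v`. -/
def vtxLabel (a : List ℕ) (v : ℕ) : ℕ × ℕ :=
  if v = 0 then (0, 1)
  else if v = 1 then (1, 1)
  else ((edgeLbl a (v - 2)).1.1 + (edgeLbl a (v - 2)).2.1,
        (edgeLbl a (v - 2)).1.2 + (edgeLbl a (v - 2)).2.2)

/-- `u` and `w` are joined by an edge of the ancestral triangle. -/
def IsEdgeAT (a : List ℕ) (u w : ℕ) : Prop :=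
  (u = 0 ∧ w = 1) ∨ (u = 1 ∧ w = 0) ∨
    (2 ≤ u ∧ (w = (edgeIdx a (u - 2)).1 ∨ w = (edgeIdx a (u - 2)).2)) ∨
    (2 ≤ w ∧ (u = (edgeIdx a (w - 2)).1 ∨ u = (edgeIdx a (w - 2)).2))

/-- A step of a path: an edge of the ancestral triangle along which the denominator of the
vertex label strictly decreases. -/
def IsStep (a : List ℕ) (u w : ℕ) : Prop :=
  IsEdgeAT a u w ∧ (vtxLabel a w).2 < (vtxLabel a u).2

/-- `IsPathFrom a s γ` : `γ` is a path of the ancestral triangle of `a` starting at the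
vertex with index `s` and ending at `0/1` or `1/1`, the denominator of the label strictly
decreasing along every edge. -/
def IsPathFrom (a : List ℕ) (s : ℕ) (γ : List ℕ) : Prop :=
  γ.head? = some s ∧ (γ.getLast? = some 0 ∨ γ.getLast? = some 1) ∧ List.Chain' (IsStep a) γ

/-- The (indices of the) triangles cut off to the left of the path by a single step from
vertex `u` down to vertex `w`. -/
def stepLeft (a : List ℕ) (u w : ℕ) : Finset ℕ :=
  if 2 ≤ u ∧ w = (edgeIdx a (u - 2)).2 then Finset.Ioc (w - 1) (u - 1) else ∅

/-- The set `S_γ` of (indices of) triangles lying on the left side of the path `γ`. -/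
def pathLeftSet (a : List ℕ) (γ : List ℕ) : Finset ℕ :=
  (γ.zip γ.tail).foldr (fun p s => stepLeft a p.1 p.2 ∪ s) ∅


/-- The unordered edge `{x, y}` is traversed by the path `γ`. -/
def onPath (γ : List ℕ) (x y : ℕ) : Prop :=
  (x, y) ∈ γ.zip γ.tail ∨ (y, x) ∈ γ.zip γ.tail

/-- The three sides of the triangle `T_m` (apex index `m + 1`, base `edgeIdx a (m−1)`). -/
def triSides (a : List ℕ) (m : ℕ) : List (ℕ × ℕ) :=
  [(m + 1, (edgeIdx a (m - 1)).1), (m + 1, (edgeIdx a (m - 1)).2),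
    ((edgeIdx a (m - 1)).1, (edgeIdx a (m - 1)).2)]

/-- The path `γ` does not go along two sides of the same triangle. -/
def NoTwoSides (a γ : List ℕ) : Prop :=
  ∀ m, 1 ≤ m → m ≤ a.sum - 1 →
    ¬ ∃ e₁ ∈ triSides a m, ∃ e₂ ∈ triSides a m,
        e₁ ≠ e₂ ∧ onPath γ e₁.1 e₁.2 ∧ onPath γ e₂.1 e₂.2

/-- The label of a vertex reduced modulo 2 (so each label becomes `0/1`, `1/1` or `1/0`). -/
def par2 (a : List ℕ) (v : ℕ) : ℕ × ℕ := ((vtxLabel a v).1 % 2, (vtxLabel a v).2 % 2)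

/-- The parity condition on the edges of the Seifert path: if `p/q ≡ 1/1 (mod 2)` it uses
only edges joining a vertex `≡ 1/1` to a vertex `≡ 1/0`; otherwise it uses only edges
joining a vertex `≡ 0/1` to a vertex `≡ 1/0`.  (The top vertex, labeled `p/q`, has index
`a.sum`.) -/
def SeifertParity (a γ : List ℕ) : Prop :=
  if par2 a a.sum = (1, 1) then
    List.Chain'
      (fun u w => (par2 a u = (1, 1) ∧ par2 a w = (1, 0)) ∨
        (par2 a u = (1, 0) ∧ par2 a w = (1, 1))) γ
  else
    List.Chain'
      (fun u w => (par2 a u = (0, 1) ∧ par2 a w = (1, 0)) ∨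
        (par2 a u = (1, 0) ∧ par2 a w = (0, 1))) γ

/-- `γ` is the Seifert path of the ancestral triangle of `a`: a path from the top vertex
that never goes along two sides of the same triangle and satisfies the parity condition. -/
def IsSeifert (a γ : List ℕ) : Prop :=
  IsPathFrom a a.sum γ ∧ NoTwoSides a γ ∧ SeifertParity a γ

/-- The bottom edge of `Fan_k` (`k ≥ 2`), i.e. the edge shared by `Fan_k` and `Fan_{k−1}`
(the base edge of the first triangle `T_{l_{k−1}}` of `Fan_k`), lies on the path `γ`. -/
def bottomEdgeOn (a γ : List ℕ) (k : ℕ) : Prop :=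
  onPath γ (edgeIdx a ((a.take (k - 1)).sum - 1)).1
    (edgeIdx a ((a.take (k - 1)).sum - 1)).2

/-- The signs `t_k ∈ {±1}` computed from the Seifert path `γ`:
`t₁ = +1` if `p/q ≡ 1/0` or `0/1 (mod 2)` and `t₁ = −1` if `p/q ≡ 1/1 (mod 2)`; and for
`2 ≤ k`, `t_k = −t_{k−1}` if the bottom edge of `Fan_k` lies on `γ`, `t_k = t_{k−1}`
otherwise. -/
def tsgn (a γ : List ℕ) : ℕ → ℤ
  | 0 => 1
  | 1 => if par2 a a.sum = (1, 1) then -1 else 1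
  | k + 2 => (if bottomEdgeOn a γ (k + 2) then -1 else 1) * tsgn a γ (k + 1)

/-- `Fan_k` lies on the left side of the path `γ`. -/
def FanLeft (a γ : List ℕ) (k : ℕ) : Prop :=
  ∀ j, 1 ≤ j → j ≤ a.sum - 1 → fanIdx a j = k → j ∈ pathLeftSet a γ

/-- The position of the triangle `T_j` inside its fan, counted from the bottom
(so `T_j = T_i^{(k)}` with `k = fanIdx a j` and `i = posInFan a j`). -/
def posInFan (a : List ℕ) (j : ℕ) : ℕ :=
  if fanIdx a j = 1 then j else j - (a.take (fanIdx a j - 1)).sum + 1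

/-- The sign `e_i = e(T_i^{(k)})` of a triangle, computed from the Seifert path `γ`:
`(−1)^i` if the bottom edge of `Fan_k` lies on `γ`; otherwise, for `k` odd, `+1` if
`Fan_k` is on the left side of `γ` and `(−1)^{i−1}` if on the right side, and for `k`
even, `+1` if `Fan_k` is on the right side and `(−1)^{i−1}` if on the left side. -/
def esgn (a γ : List ℕ) (j : ℕ) : ℤ :=
  if bottomEdgeOn a γ (fanIdx a j) then (-1) ^ posInFan a j
  else if Odd (fanIdx a j) then
    (if FanLeft a γ (fanIdx a j) then 1 else (-1) ^ (posInFan a j - 1))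
  else (if FanLeft a γ (fanIdx a j) then (-1) ^ (posInFan a j - 1) else 1)

/-- The quantity `d(k)` (taking the first applicable case): `a_k − 1` if `k` is odd and
`t_k = −1` or `k` is even and `t_k = +1`; `t_k` if the bottom edge of `Fan_k` lies on the
Seifert path; and `1` otherwise. -/
def dval (a γ : List ℕ) (k : ℕ) : ℤ :=
  if (Odd k ∧ tsgn a γ k = -1) ∨ (Even k ∧ tsgn a γ k = 1) then (a.getD (k - 1) 0 : ℤ) - 1
  else if bottomEdgeOn a γ k then tsgn a γ k
  else 1

/-- `Σ_{k=1}^n d(k)`, so that `d = −(1/2) · dsum`. -/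
def dsum (a γ : List ℕ) : ℤ := ∑ k ∈ Finset.Icc 1 a.length, dval a γ k


/-! ### Auxiliary lemmas -/

section Aux

lemma edgeLbl_den_pos (b : List ℕ) (m : ℕ) :
    1 ≤ (edgeLbl b m).1.2 ∧ 1 ≤ (edgeLbl b m).2.2 := by
  induction m with
  | zero => simp [edgeLbl]
  | succ m ih =>
    simp only [edgeLbl]
    split <;> simp <;> omega

lemma edgeLbl_det (b : List ℕ) (m : ℕ) :
    (edgeLbl b m).1.2 * (edgeLbl b m).2.1 = (edgeLbl b m).1.1 * (edgeLbl b m).2.2 + 1 := by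
  induction m with
  | zero => simp [edgeLbl]
  | succ m ih =>
    simp only [edgeLbl]
    split <;> ring_nf <;> ring_nf at ih <;> nlinarith [ih]

lemma edgeLbl_num_le (b : List ℕ) (m : ℕ) :
    (edgeLbl b m).1.1 ≤ (edgeLbl b m).1.2 ∧ (edgeLbl b m).2.1 ≤ (edgeLbl b m).2.2 := by
  induction m with
  | zero => simp [edgeLbl]
  | succ m ih =>
    simp only [edgeLbl]
    split <;> simp <;> omega

lemma edgeLbl_denSum_lt (b : List ℕ) (m : ℕ) :
    (edgeLbl b m).1.2 + (edgeLbl b m).2.2 < (edgeLbl b (m+1)).1.2 + (edgeLbl b (m+1)).2.2 := by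
  have h := edgeLbl_den_pos b m
  conv_rhs => rw [edgeLbl]
  split <;> simp <;> omega

lemma edgeLbl_denSum_mono (b : List ℕ) : StrictMono (fun m => (edgeLbl b m).1.2 + (edgeLbl b m).2.2) :=
  strictMono_nat_of_lt_succ (edgeLbl_denSum_lt b)

lemma vtxLabel_zero (b : List ℕ) : vtxLabel b 0 = (0, 1) := by simp [vtxLabel]

lemma vtxLabel_one (b : List ℕ) : vtxLabel b 1 = (1, 1) := by simp [vtxLabel]

lemma vtxLabel_of_two_le (b : List ℕ) {v : ℕ} (h : 2 ≤ v) :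
    vtxLabel b v = ((edgeLbl b (v - 2)).1.1 + (edgeLbl b (v - 2)).2.1,
      (edgeLbl b (v - 2)).1.2 + (edgeLbl b (v - 2)).2.2) := by
  have h0 : v ≠ 0 := by omega
  have h1 : v ≠ 1 := by omega
  simp [vtxLabel, h0, h1]

lemma vtxLabel_den_pos (b : List ℕ) (v : ℕ) : 1 ≤ (vtxLabel b v).2 := by
  rcases Nat.lt_or_ge v 2 with h | h
  · interval_cases v <;> simp [vtxLabel]
  · rw [vtxLabel_of_two_le b h]
    have := edgeLbl_den_pos b (v - 2)
    simp; omega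

lemma vtxLabel_den_two_le (b : List ℕ) {v : ℕ} (h : 2 ≤ v) : 2 ≤ (vtxLabel b v).2 := by
  rw [vtxLabel_of_two_le b h]
  have := edgeLbl_den_pos b (v - 2)
  simp; omega

lemma vtxLabel_den_lt (b : List ℕ) {v w : ℕ} (h2 : 2 ≤ v) (hvw : v < w) :
    (vtxLabel b v).2 < (vtxLabel b w).2 := by
  rw [vtxLabel_of_two_le b h2, vtxLabel_of_two_le b (by omega : 2 ≤ w)]
  have := edgeLbl_denSum_mono b (show v - 2 < w - 2 by omega)
  simpa using this

lemma edgeIdx_le (b : List ℕ) (m : ℕ) :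
    (edgeIdx b m).1 ≤ m + 1 ∧ (edgeIdx b m).2 ≤ m + 1 := by
  induction m with
  | zero => simp [edgeIdx]
  | succ m ih =>
    simp only [edgeIdx]
    split <;> simp <;> omega

lemma vtx_edgeIdx (b : List ℕ) (m : ℕ) :
    vtxLabel b (edgeIdx b m).1 = (edgeLbl b m).1 ∧
      vtxLabel b (edgeIdx b m).2 = (edgeLbl b m).2 := by
  induction m with
  | zero =>
    constructor <;> simp [edgeIdx, edgeLbl, vtxLabel]
  | succ m ih =>
    simp only [edgeIdx, edgeLbl]
    have hv : vtxLabel b (m + 2) = ((edgeLbl b m).1.1 + (edgeLbl b m).2.1,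
        (edgeLbl b m).1.2 + (edgeLbl b m).2.2) := by
      rw [vtxLabel_of_two_le b (by omega)]
      simp
    split
    · exact ⟨ih.1, by simpa using hv⟩
    · exact ⟨by simpa using hv, ih.2⟩

lemma isStep_iff (b : List ℕ) (u w : ℕ) :
    IsStep b u w ↔ 2 ≤ u ∧ (w = (edgeIdx b (u - 2)).1 ∨ w = (edgeIdx b (u - 2)).2) := by
  constructor
  · rintro ⟨he, hd⟩
    rcases he with ⟨rfl, rfl⟩ | ⟨rfl, rfl⟩ | h | ⟨hw, hu⟩
    · simp [vtxLabel] at hd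
    · simp [vtxLabel] at hd
    · exact h
    · exfalso
      have hub : u ≤ w - 1 := by
        have := edgeIdx_le b (w - 2)
        rcases hu with rfl | rfl <;> omega
      rcases Nat.lt_or_ge u 2 with h2 | h2
      · have : 2 ≤ (vtxLabel b w).2 := vtxLabel_den_two_le b hw
        have : (vtxLabel b u).2 = 1 := by interval_cases u <;> simp [vtxLabel]
        omega
      · have : (vtxLabel b u).2 < (vtxLabel b w).2 := vtxLabel_den_lt b h2 (by omega)
        omega
  · rintro ⟨h2, hw⟩
    have hcons := vtx_edgeIdx b (u - 2)
    have hpos := edgeLbl_den_pos b (u - 2)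
    have hu : (vtxLabel b u).2 = (edgeLbl b (u-2)).1.2 + (edgeLbl b (u-2)).2.2 := by
      rw [vtxLabel_of_two_le b h2]
    refine ⟨Or.inr (Or.inr (Or.inl ⟨h2, hw⟩)), ?_⟩
    rcases hw with rfl | rfl
    · rw [hcons.1, hu]; omega
    · rw [hcons.2, hu]; omega

lemma isStep_lt {b : List ℕ} {u w : ℕ} (h : IsStep b u w) : w < u := by
  rw [isStep_iff] at h
  obtain ⟨h2, hw⟩ := h
  have := edgeIdx_le b (u - 2)
  rcases hw with rfl | rfl <;> omega

lemma not_isStep_of_le_one {b : List ℕ} {u w : ℕ} (hu : u ≤ 1) : ¬ IsStep b u w := by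
  rw [isStep_iff]; omega

end Aux


section Parity

lemma parity_det {r1 s1 r2 s2 : ℕ} (h : s1 * r2 = r1 * s2 + 1) :
    (r1 % 2, s1 % 2) ≠ (r2 % 2, s2 % 2) ∧ (r1 % 2, s1 % 2) ≠ (0, 0) ∧
      (r2 % 2, s2 % 2) ≠ (0, 0) := by
  refine ⟨?_, ?_, ?_⟩
  · intro hEq
    have hr : r1 % 2 = r2 % 2 := by simpa using congrArg Prod.fst hEq
    have hs : s1 % 2 = s2 % 2 := by simpa using congrArg Prod.snd hEq
    have hmod : (s1 * r2) % 2 = (r1 * s2) % 2 := by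
      have := Nat.ModEq.mul (show s1 ≡ s2 [MOD 2] from hs) (show r2 ≡ r1 [MOD 2] from hr.symm)
      simpa [Nat.mul_comm, Nat.ModEq] using this
    rw [h] at hmod
    generalize r1 * s2 = t at hmod
    omega
  · intro hEq
    have hr : r1 % 2 = 0 := by simpa using congrArg Prod.fst hEq
    have hs : s1 % 2 = 0 := by simpa using congrArg Prod.snd hEq
    have h1 : (s1 * r2) % 2 = 0 := by
      have : s1 * r2 % 2 = s1 % 2 * (r2 % 2) % 2 := Nat.mul_mod _ _ _
      simp [this, hs]
    have h2 : (r1 * s2) % 2 = 0 := by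
      have : r1 * s2 % 2 = r1 % 2 * (s2 % 2) % 2 := Nat.mul_mod _ _ _
      simp [this, hr]
    rw [h] at h1
    generalize r1 * s2 = t at h1 h2
    omega
  · intro hEq
    have hr : r2 % 2 = 0 := by simpa using congrArg Prod.fst hEq
    have hs : s2 % 2 = 0 := by simpa using congrArg Prod.snd hEq
    have h1 : (s1 * r2) % 2 = 0 := by
      have : s1 * r2 % 2 = s1 % 2 * (r2 % 2) % 2 := Nat.mul_mod _ _ _
      simp [this, hr]
    have h2 : (r1 * s2) % 2 = 0 := by
      have : r1 * s2 % 2 = r1 % 2 * (s2 % 2) % 2 := Nat.mul_mod _ _ _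
      simp [this, hs]
    rw [h] at h1
    generalize r1 * s2 = t at h1 h2
    omega

lemma par2_edge (b : List ℕ) (m : ℕ) :
    par2 b (edgeIdx b m).1 ≠ par2 b (edgeIdx b m).2 ∧
      par2 b (edgeIdx b m).1 ≠ (0, 0) ∧ par2 b (edgeIdx b m).2 ≠ (0, 0) := by
  have hc := vtx_edgeIdx b m
  have hdet := edgeLbl_det b m
  have h1 : par2 b (edgeIdx b m).1 = ((edgeLbl b m).1.1 % 2, (edgeLbl b m).1.2 % 2) := by
    simp [par2, hc.1]
  have h2 : par2 b (edgeIdx b m).2 = ((edgeLbl b m).2.1 % 2, (edgeLbl b m).2.2 % 2) := by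
    simp [par2, hc.2]
  rw [h1, h2]
  exact parity_det hdet

lemma chain'_rel_of_zip {α : Type*} {R : α → α → Prop} :
    ∀ {l : List α} {x y : α}, List.Chain' R l → (x, y) ∈ l.zip l.tail → R x y := by
  intro l
  induction l with
  | nil => intro x y _ h; simp at h
  | cons a l ih =>
    intro x y hc hm
    cases l with
    | nil => simp at hm
    | cons b t =>
      simp only [List.tail_cons, List.zip_cons_cons, List.mem_cons] at hm
      rcases hm with h | h
      · rw [Prod.mk.injEq] at h
        obtain ⟨rfl, rfl⟩ := h
        exact hc.rel_head
      · exact ih hc.tail (by simpa using h)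

lemma path_unique {b : List ℕ} {Q : ℕ → ℕ → Prop}
    (hQ : ∀ x y z, Q x y → Q x z → par2 b y = par2 b z) :
    ∀ (γ δ : List ℕ) (s : ℕ), γ.head? = some s → δ.head? = some s →
      (γ.getLast? = some 0 ∨ γ.getLast? = some 1) →
      (δ.getLast? = some 0 ∨ δ.getLast? = some 1) →
      List.Chain' (IsStep b) γ → List.Chain' (IsStep b) δ →
      List.Chain' Q γ → List.Chain' Q δ → γ = δ := by
  intro γ
  induction γ with
  | nil => intro δ s h; simp at h
  | cons x γt ih =>
    intro δ s hγh hδh hγl hδl hγs hδs hγq hδq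
    have hxs : x = s := by simpa using hγh
    cases δ with
    | nil => simp at hδh
    | cons s' δt =>
      obtain rfl : x = s' := by rw [hxs]; simpa using hδh.symm
      cases γt with
      | nil =>
        have hx1 : x ≤ 1 := by
          rcases hγl with h | h <;> simp at h <;> omega
        cases δt with
        | nil => rfl
        | cons z δt' =>
          exact absurd hδs.rel_head (not_isStep_of_le_one hx1)
      | cons y γt' =>
        cases δt with
        | nil =>
          have hx1 : x ≤ 1 := by
            rcases hδl with h | h <;> simp at h <;> omega
          exact absurd hγs.rel_head (not_isStep_of_le_one hx1)
        | cons z δt' =>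
          have hxy : IsStep b x y := hγs.rel_head
          have hxz : IsStep b x z := hδs.rel_head
          have hyz : y = z := by
            have h1 := (isStep_iff b x y).1 hxy
            have h2 := (isStep_iff b x z).1 hxz
            have hpar := hQ x y z hγq.rel_head hδq.rel_head
            have hne := (par2_edge b (x - 2)).1
            rcases h1.2 with rfl | rfl <;> rcases h2.2 with rfl | rfl
            · rfl
            · exact absurd hpar hne
            · exact absurd hpar.symm hne
            · rfl
          subst hyz
          have := ih (y :: δt') y (by simp) (by simp)
            (by simpa [List.getLast?_cons_cons] using hγl)
            (by simpa [List.getLast?_cons_cons] using hδl)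
            hγs.tail hδs.tail hγq.tail hδq.tail
          rw [this]

end Parity


section Mirror

/-- The mirror involution on vertex indices: swaps `0` and `1`, fixes everything else. -/
def sw (v : ℕ) : ℕ := if v = 0 then 1 else if v = 1 then 0 else v

lemma sw_of_two_le {v : ℕ} (h : 2 ≤ v) : sw v = v := by
  unfold sw
  rw [if_neg (by omega), if_neg (by omega)]

lemma sw_sw (v : ℕ) : sw (sw v) = v := by
  rcases v with _ | _ | v <;> simp [sw]

lemma sw_inj : Function.Injective sw := by
  intro u v h
  unfold sw at h
  split_ifs at h <;> omega

lemma ell_mono (b : List ℕ) : Monotone (ell b) := by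
  apply monotone_nat_of_le_succ
  intro n
  unfold ell
  rw [List.take_succ]
  simp

lemma fanIdx_eq_of {b : List ℕ} {j k : ℕ} (h1 : j < ell b k)
    (h2 : ∀ m < k, ¬ j < ell b m) : fanIdx b j = k := by
  refine le_antisymm (Nat.sInf_le h1) (le_csInf ⟨k, h1⟩ ?_)
  intro m hm
  by_contra hc
  exact h2 m (by omega) hm

lemma ell_length (b : List ℕ) : ell b b.length = b.sum := by
  simp [ell]

lemma fanIdx_spec {b : List ℕ} {j : ℕ} (hj : j < b.sum) :
    j < ell b (fanIdx b j) ∧ 1 ≤ fanIdx b j ∧ ell b (fanIdx b j - 1) ≤ j := by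
  have hne : {k | j < ell b k}.Nonempty := ⟨b.length, by rwa [Set.mem_setOf_eq, ell_length]⟩
  have hmem : j < ell b (fanIdx b j) := Nat.sInf_mem hne
  have h1 : 1 ≤ fanIdx b j := by
    rcases Nat.eq_zero_or_pos (fanIdx b j) with h | h
    · rw [h] at hmem; simp [ell] at hmem
    · exact h
  have h2 : ell b (fanIdx b j - 1) ≤ j := by
    have hlt : fanIdx b j - 1 < sInf {k | j < ell b k} := by
      have : fanIdx b j = sInf {k | j < ell b k} := rfl
      omega
    have := Nat.notMem_of_lt_sInf hlt
    simpa [Set.mem_setOf_eq] using this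
  exact ⟨hmem, h1, h2⟩

variable {a1 : ℕ} {rest : List ℕ}

lemma ell_shift (h2 : 2 ≤ a1) (k : ℕ) (hk : 1 ≤ k) :
    ell (1 :: (a1 - 1) :: rest) (k + 1) = ell (a1 :: rest) k := by
  obtain ⟨k', rfl⟩ : ∃ k', k = k' + 1 := ⟨k - 1, by omega⟩
  simp [ell, List.take_succ_cons]
  omega

lemma fanIdx_shift (h2 : 2 ≤ a1) {j : ℕ} (hj1 : 1 ≤ j) (hj : j < (a1 :: rest).sum) :
    fanIdx (1 :: (a1 - 1) :: rest) j = fanIdx (a1 :: rest) j + 1 := by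
  obtain ⟨hmem, hk1, hk2⟩ := fanIdx_spec hj
  set k := fanIdx (a1 :: rest) j with hk
  apply fanIdx_eq_of
  · rwa [ell_shift h2 k hk1]
  · intro m hm
    rcases Nat.eq_zero_or_pos m with rfl | hm1
    · simp [ell]
    · have hm' : m ≤ k := by omega
      obtain ⟨m', rfl⟩ : ∃ m', m = m' + 1 := ⟨m - 1, by omega⟩
      rcases Nat.eq_zero_or_pos m' with rfl | hm'1
      · simp [ell]; omega
      · rw [ell_shift h2 m' hm'1]
        have : ell (a1 :: rest) m' ≤ ell (a1 :: rest) (k - 1) := ell_mono _ (by omega)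
        omega

lemma isRight_flip (h2 : 2 ≤ a1) {j : ℕ} (hj1 : 1 ≤ j) (hj : j < (a1 :: rest).sum) :
    isRight (1 :: (a1 - 1) :: rest) j ↔ ¬ isRight (a1 :: rest) j := by
  unfold isRight
  rw [fanIdx_shift h2 hj1 hj, Nat.odd_add_one]

lemma edgeIdx_mirror (h2 : 2 ≤ a1) {m : ℕ} (hm : m ≤ (a1 :: rest).sum - 2) :
    edgeIdx (1 :: (a1 - 1) :: rest) m =
      (sw (edgeIdx (a1 :: rest) m).2, sw (edgeIdx (a1 :: rest) m).1) := by
  induction m with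
  | zero => simp [edgeIdx, sw]
  | succ m ih =>
    have hs : 2 ≤ (a1 :: rest).sum := by simp [List.sum_cons]; omega
    have hmm : m ≤ (a1 :: rest).sum - 2 := by omega
    have hflip := isRight_flip (rest := rest) h2 (j := m + 1) (by omega) (by omega)
    rw [edgeIdx, edgeIdx, ih hmm]
    by_cases hR : isRight (a1 :: rest) (m + 1)
    · rw [if_neg (by rw [hflip]; simpa using hR), if_pos hR]
      simp [sw_of_two_le (show 2 ≤ m + 2 by omega)]
    · rw [if_pos (by rw [hflip]; exact hR), if_neg hR]
      simp [sw_of_two_le (show 2 ≤ m + 2 by omega)]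

lemma edgeLbl_mirror (h2 : 2 ≤ a1) {m : ℕ} (hm : m ≤ (a1 :: rest).sum - 2) :
    edgeLbl (1 :: (a1 - 1) :: rest) m =
      (((edgeLbl (a1 :: rest) m).2.2 - (edgeLbl (a1 :: rest) m).2.1, (edgeLbl (a1 :: rest) m).2.2),
        ((edgeLbl (a1 :: rest) m).1.2 - (edgeLbl (a1 :: rest) m).1.1, (edgeLbl (a1 :: rest) m).1.2)) := by
  induction m with
  | zero => simp [edgeLbl]
  | succ m ih =>
    have hs : 2 ≤ (a1 :: rest).sum := by simp [List.sum_cons]; omega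
    have hmm : m ≤ (a1 :: rest).sum - 2 := by omega
    have hflip := isRight_flip (rest := rest) h2 (j := m + 1) (by omega) (by omega)
    have hle := edgeLbl_num_le (a1 :: rest) m
    rw [edgeLbl, edgeLbl, ih hmm]
    by_cases hR : isRight (a1 :: rest) (m + 1)
    · rw [if_neg (by rw [hflip]; simpa using hR), if_pos hR]
      simp only [Prod.ext_iff]
      norm_num
      omega
    · rw [if_pos (by rw [hflip]; exact hR), if_neg hR]
      simp only [Prod.ext_iff]
      norm_num
      omega

lemma vtxLabel_num_le (b : List ℕ) (v : ℕ) : (vtxLabel b v).1 ≤ (vtxLabel b v).2 := by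
  rcases Nat.lt_or_ge v 2 with h | h
  · interval_cases v <;> simp [vtxLabel]
  · rw [vtxLabel_of_two_le b h]
    have := edgeLbl_num_le b (v - 2)
    simp; omega

lemma vtxLabel_mirror (h2 : 2 ≤ a1) {v : ℕ} (hv : v ≤ (a1 :: rest).sum) :
    vtxLabel (1 :: (a1 - 1) :: rest) (sw v) =
      ((vtxLabel (a1 :: rest) v).2 - (vtxLabel (a1 :: rest) v).1, (vtxLabel (a1 :: rest) v).2) := by
  rcases Nat.lt_or_ge v 2 with h | h
  · interval_cases v <;> simp [vtxLabel, sw]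
  · rw [sw_of_two_le h, vtxLabel_of_two_le _ h, vtxLabel_of_two_le _ h,
      edgeLbl_mirror h2 (show v - 2 ≤ (a1 :: rest).sum - 2 by omega)]
    have := edgeLbl_num_le (a1 :: rest) (v - 2)
    simp
    omega

lemma par2_mirror (h2 : 2 ≤ a1) {v : ℕ} (hv : v ≤ (a1 :: rest).sum) :
    par2 (1 :: (a1 - 1) :: rest) (sw v) =
      (((par2 (a1 :: rest) v).1 + (par2 (a1 :: rest) v).2) % 2, (par2 (a1 :: rest) v).2) := by
  have hle := vtxLabel_num_le (a1 :: rest) v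
  unfold par2
  rw [vtxLabel_mirror h2 hv]
  simp only [Prod.mk.injEq]
  exact ⟨by omega, trivial⟩

lemma chain_mem_le_head {b : List ℕ} :
    ∀ {l : List ℕ} {s : ℕ}, List.Chain' (IsStep b) l → l.head? = some s →
      ∀ v ∈ l, v ≤ s := by
  intro l
  induction l with
  | nil => intro s _ _ v hv; simp at hv
  | cons c t ih =>
    intro s hc hh v hv
    obtain rfl : s = c := by simpa using hh.symm
    rcases List.mem_cons.mp hv with rfl | hv
    · exact le_refl _
    · cases t with
      | nil => simp at hv
      | cons d t' =>
        have hd : d < s := isStep_lt hc.rel_head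
        have := ih (s := d) hc.tail rfl v hv
        omega

lemma isStep_mirror (h2 : 2 ≤ a1) {u w : ℕ} (hu : u ≤ (a1 :: rest).sum)
    (h : IsStep (a1 :: rest) u w) : IsStep (1 :: (a1 - 1) :: rest) (sw u) (sw w) := by
  rw [isStep_iff] at h ⊢
  obtain ⟨h2u, hw⟩ := h
  rw [sw_of_two_le h2u]
  refine ⟨h2u, ?_⟩
  rw [edgeIdx_mirror h2 (show u - 2 ≤ (a1 :: rest).sum - 2 by omega)]
  rcases hw with rfl | rfl
  · right; rfl
  · left; rfl

end Mirror


section Value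

/-- One stacking move on an edge (labelled by its endpoints). -/
def stp (bl : Bool) (e : (ℕ × ℕ) × (ℕ × ℕ)) : (ℕ × ℕ) × (ℕ × ℕ) :=
  if bl then (e.1, (e.1.1 + e.2.1, e.1.2 + e.2.2)) else ((e.1.1 + e.2.1, e.1.2 + e.2.2), e.2)

/-- Run a word of stacking moves. -/
def runW (w : List Bool) (e : (ℕ × ℕ) × (ℕ × ℕ)) : (ℕ × ℕ) × (ℕ × ℕ) :=
  w.foldl (fun e bl => stp bl e) e

/-- The mediant of the two endpoint labels of an edge. -/
def med (e : (ℕ × ℕ) × (ℕ × ℕ)) : ℕ × ℕ := (e.1.1 + e.2.1, e.1.2 + e.2.2)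

lemma runW_nil (e) : runW [] e = e := rfl

lemma runW_append (w1 w2 : List Bool) (e) : runW (w1 ++ w2) e = runW w2 (runW w1 e) :=
  List.foldl_append

lemma runW_cons (bl : Bool) (w : List Bool) (e) : runW (bl :: w) e = runW w (stp bl e) := rfl

lemma edgeLbl_eq_runW (b : List ℕ) (m : ℕ) :
    edgeLbl b m = runW ((List.range m).map (fun i => decide (isRight b (i + 1)))) ((0,1),(1,1)) := by
  induction m with
  | zero => simp [edgeLbl, runW]
  | succ m ih =>
    rw [List.range_succ, List.map_append, runW_append, ← ih]
    by_cases hR : isRight b (m + 1)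
    · simp [edgeLbl, runW, stp, hR]
    · simp [edgeLbl, runW, stp, hR]

/-- The fan word of the lower fans. -/
def wordAux : List ℕ → List Bool
  | [] => []
  | x :: t => List.replicate x true ++ (wordAux t).map not

/-- The fan word of the whole ancestral triangle of `c :: t`. -/
def wordAT : List ℕ → List Bool
  | [] => []
  | c :: t => List.replicate (c - 1) true ++ (wordAux t).map not

/-- Continuants: `cf t = (K t).2 / (K t).1`. -/
def K : List ℕ → ℕ × ℕ
  | [] => (1, 0)
  | x :: t => (x * (K t).1 + (K t).2, (K t).1)

lemma K_pos (t : List ℕ) (ht : ∀ x ∈ t, 1 ≤ x) : 1 ≤ (K t).1 := by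
  induction t with
  | nil => simp [K]
  | cons x t ih =>
    have hx : 1 ≤ x := ht x (by simp)
    have := ih (fun y hy => ht y (by simp [hy]))
    simp [K]
    nlinarith

lemma K_coprime (t : List ℕ) : Nat.Coprime (K t).1 (K t).2 := by
  induction t with
  | nil => simp [K, Nat.Coprime]
  | cons x t ih =>
    simp only [K]
    have : ((K t).2 + x * (K t).1).Coprime ((K t).1) := by
      rw [Nat.coprime_add_mul_right_left]
      exact ih.symm
    rwa [Nat.add_comm] at this

lemma cf_nonneg (t : List ℕ) (ht : ∀ x ∈ t, 1 ≤ x) : 0 ≤ cf t := by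
  induction t with
  | nil => simp [cf]
  | cons x t ih =>
    have hx : 1 ≤ x := ht x (by simp)
    have h0 := ih (fun y hy => ht y (by simp [hy]))
    rw [cf]
    have hx' : (1:ℚ) ≤ (x:ℚ) := by exact_mod_cast hx
    apply div_nonneg (by norm_num)
    linarith

lemma cf_eq_K (t : List ℕ) (ht : ∀ x ∈ t, 1 ≤ x) : cf t = ((K t).2 : ℚ) / ((K t).1 : ℚ) := by
  induction t with
  | nil => simp [cf, K]
  | cons x t ih =>
    have hx : 1 ≤ x := ht x (by simp)
    have hK := K_pos t (fun y hy => ht y (by simp [hy]))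
    have hKq : (0 : ℚ) < ((K t).1 : ℚ) := by exact_mod_cast hK
    rw [cf, ih (fun y hy => ht y (by simp [hy]))]
    simp only [K]
    have hden : ((x : ℚ) + ((K t).2 : ℚ) / ((K t).1 : ℚ)) ≠ 0 := by
      have h2 : (0:ℚ) ≤ ((K t).2 : ℚ) / ((K t).1 : ℚ) := by positivity
      have : (1:ℚ) ≤ (x:ℚ) := by exact_mod_cast hx
      linarith
    field_simp
    norm_cast

lemma length_wordAux (t : List ℕ) : (wordAux t).length = t.sum := by
  induction t with
  | nil => simp [wordAux]
  | cons x t ih => simp [wordAux, ih]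

lemma stp_swap (bl : Bool) (e : (ℕ × ℕ) × (ℕ × ℕ)) :
    stp (!bl) (e.2, e.1) = ((stp bl e).2, (stp bl e).1) := by
  cases bl <;> simp [stp] <;> omega

lemma runW_map_not (w : List Bool) : ∀ e, runW (w.map not) e = ((runW w (e.2, e.1)).2, (runW w (e.2, e.1)).1) := by
  induction w with
  | nil => intro e; simp [runW]
  | cons bl w ih =>
    intro e
    have hs : stp (!bl) e = ((stp bl (e.2, e.1)).2, (stp bl (e.2, e.1)).1) := by
      simpa using stp_swap bl (e.2, e.1)
    rw [List.map_cons, runW_cons, runW_cons, hs, ih]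

lemma runW_replicate_true (k : ℕ) : ∀ e, runW (List.replicate k true) e =
    (e.1, (k * e.1.1 + e.2.1, k * e.1.2 + e.2.2)) := by
  induction k with
  | zero => intro e; simp [runW]
  | succ k ih =>
    intro e
    rw [List.replicate_succ, runW_cons, ih]
    simp [stp]
    constructor <;> ring

lemma wordAux_ne_nil {t : List ℕ} (ht : ∀ x ∈ t, 1 ≤ x) (hne : t ≠ []) : wordAux t ≠ [] := by
  intro h
  have := length_wordAux t
  rw [h] at this
  cases t with
  | nil => exact hne rfl
  | cons x t' =>
    have hx : 1 ≤ x := ht x (by simp)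
    simp at this
    omega

lemma med_runW_dropLast (t : List ℕ) (hne : t ≠ []) (ht : ∀ x ∈ t, 1 ≤ x) :
    ∀ e, med (runW ((wordAux t).dropLast) e) =
      ((K t).1 * e.1.1 + (K t).2 * e.2.1, (K t).1 * e.1.2 + (K t).2 * e.2.2) := by
  induction t with
  | nil => exact absurd rfl hne
  | cons x t ih =>
    intro e
    have hx : 1 ≤ x := ht x (by simp)
    by_cases ht' : t = []
    · subst ht'
      obtain ⟨x', rfl⟩ : ∃ x', x = x' + 1 := ⟨x - 1, by omega⟩
      rw [show wordAux [x' + 1] = List.replicate x' true ++ [true] by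
        simp [wordAux, List.replicate_succ'],
        List.dropLast_concat, runW_replicate_true]
      refine Prod.ext ?_ ?_ <;> simp [med, K] <;> ring
    · have htt : ∀ y ∈ t, 1 ≤ y := fun y hy => ht y (by simp [hy])
      have hwane : (wordAux t).map not ≠ [] := by
        simpa using wordAux_ne_nil htt ht'
      rw [show wordAux (x :: t) = List.replicate x true ++ (wordAux t).map not from rfl,
        List.dropLast_append_of_ne_nil hwane,
        runW_append, runW_replicate_true, ← List.map_dropLast, runW_map_not]
      have hmed : ∀ f : (ℕ × ℕ) × (ℕ × ℕ), med (f.2, f.1) = med f := by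
        intro f
        refine Prod.ext ?_ ?_ <;> simp [med] <;> ring
      rw [hmed, ih ht' htt]
      refine Prod.ext ?_ ?_ <;> simp [K] <;> ring

end Value


section TopLabel

lemma ell_cons (x : ℕ) (t : List ℕ) (k : ℕ) : ell (x :: t) (k + 1) = x + ell t k := by
  simp [ell, List.take_succ_cons]

lemma fanIdx_lt_head {x : ℕ} {t : List ℕ} {j : ℕ} (hj : j < x) : fanIdx (x :: t) j = 1 := by
  apply fanIdx_eq_of
  · rw [show (1:ℕ) = 0 + 1 from rfl, ell_cons]
    simp [ell]; omega
  · intro m hm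
    interval_cases m
    simp [ell]

lemma fanIdx_cons_ge {x : ℕ} {t : List ℕ} {j : ℕ} (hx : x ≤ j) (hj : j - x < t.sum) :
    fanIdx (x :: t) j = fanIdx t (j - x) + 1 := by
  obtain ⟨hmem, h1, h2⟩ := fanIdx_spec (b := t) hj
  apply fanIdx_eq_of
  · rw [ell_cons]; omega
  · intro m hm
    rcases m with _ | m'
    · simp [ell]
    · rw [ell_cons]
      have : ell t m' ≤ ell t (fanIdx t (j - x) - 1) := ell_mono _ (by omega)
      omega

lemma wordAux_getElem (t : List ℕ) (ht : ∀ x ∈ t, 1 ≤ x) :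
    ∀ m (h : m < (wordAux t).length), (wordAux t)[m]'h = decide (Odd (fanIdx t m)) := by
  induction t with
  | nil => intro m h; simp [wordAux] at h
  | cons x t ih =>
    intro m h
    have hm : m < x + t.sum := by
      rw [length_wordAux] at h
      simpa using h
    by_cases hmx : m < x
    · simp only [wordAux]
      rw [List.getElem_append_left (by simpa using hmx), List.getElem_replicate,
        fanIdx_lt_head hmx]
      simp
    · have hmx' : x ≤ m := by omega
      have hrec : m - x < t.sum := by omega
      simp only [wordAux]
      rw [List.getElem_append_right (by simpa using hmx')]
      simp only [List.length_replicate, List.getElem_map]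
      rw [ih (fun y hy => ht y (by simp [hy])) (m - x)
          (by rw [length_wordAux]; exact hrec),
        fanIdx_cons_ge hmx' hrec, ← decide_not]
      exact decide_eq_decide.mpr Nat.odd_add_one.symm

lemma length_wordAT (c : ℕ) (t : List ℕ) (hc : 1 ≤ c) :
    (wordAT (c :: t)).length = (c :: t).sum - 1 := by
  simp [wordAT, length_wordAux]
  omega

lemma wordAT_getElem (c : ℕ) (t : List ℕ) (ht : ∀ x ∈ t, 1 ≤ x) (hc : 1 ≤ c) :
    ∀ m (h : m < (wordAT (c :: t)).length),
      (wordAT (c :: t))[m]'h = decide (Odd (fanIdx (c :: t) (m + 1))) := by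
  intro m h
  have hm : m < c + t.sum - 1 := by
    rw [length_wordAT c t hc] at h
    simpa using h
  by_cases hmx : m < c - 1
  · simp only [wordAT]
    rw [List.getElem_append_left (by simpa using hmx), List.getElem_replicate,
      fanIdx_lt_head (by omega : m + 1 < c)]
    simp
  · have hmx' : c - 1 ≤ m := by omega
    have hcm : c ≤ m + 1 := by omega
    have hrec : (m + 1) - c < t.sum := by omega
    have hidx : m - (c - 1) = (m + 1) - c := by omega
    simp only [wordAT]
    rw [List.getElem_append_right (by simpa using hmx')]
    simp only [List.length_replicate, List.getElem_map]
    rw [wordAux_getElem t ht (m - (c - 1))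
        (by rw [length_wordAux]; omega)]
    rw [hidx, fanIdx_cons_ge hcm hrec, ← decide_not]
    exact decide_eq_decide.mpr Nat.odd_add_one.symm

lemma rights_eq_dropLast (c : ℕ) (t : List ℕ) (hc : 1 ≤ c) (ht : ∀ x ∈ t, 1 ≤ x)
    (hs : 2 ≤ (c :: t).sum) :
    (List.range ((c :: t).sum - 2)).map (fun i => decide (isRight (c :: t) (i + 1))) =
      (wordAT (c :: t)).dropLast := by
  apply List.ext_getElem
  · simp [List.length_dropLast, length_wordAT c t hc]
    omega
  · intro n h1 h2
    rw [List.getElem_map, List.getElem_range, List.getElem_dropLast,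
      wordAT_getElem c t ht hc n (by
        simp only [List.length_dropLast] at h2
        omega)]
    exact decide_eq_decide.mpr Iff.rfl

lemma vtxLabel_top (c : ℕ) (t : List ℕ) (hc : 1 ≤ c) (ht : ∀ x ∈ t, 1 ≤ x)
    (hs : 2 ≤ (c :: t).sum) :
    vtxLabel (c :: t) ((c :: t).sum) = ((K (c :: t)).2, (K (c :: t)).1) := by
  rw [vtxLabel_of_two_le _ hs]
  show med (edgeLbl (c :: t) ((c :: t).sum - 2)) = _
  rw [edgeLbl_eq_runW, rights_eq_dropLast c t hc ht hs]
  by_cases ht' : t = []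
  · subst ht'
    have hc2 : 2 ≤ c := by simpa using hs
    rw [show wordAT [c] = List.replicate (c - 1) true from by simp [wordAT, wordAux],
      show List.replicate (c - 1) true = List.replicate (c - 2) true ++ [true] from by
        rw [← List.replicate_succ']
        congr 1
        omega,
      List.dropLast_concat, runW_replicate_true]
    refine Prod.ext ?_ ?_ <;> simp [med, K] <;> omega
  · have hwane : (wordAux t).map not ≠ [] := by
      simpa using wordAux_ne_nil ht ht'
    rw [show wordAT (c :: t) = List.replicate (c - 1) true ++ (wordAux t).map not from rfl,
      List.dropLast_append_of_ne_nil hwane, runW_append, runW_replicate_true,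
      ← List.map_dropLast, runW_map_not]
    have hmed : ∀ f : (ℕ × ℕ) × (ℕ × ℕ), med (f.2, f.1) = med f := by
      intro f
      refine Prod.ext ?_ ?_ <;> simp [med] <;> ring
    have hc1 : c - 1 + 1 = c := by omega
    rw [hmed, med_runW_dropLast t ht' ht]
    refine Prod.ext ?_ ?_ <;> simp [K, Nat.mul_comm] <;> omega

lemma vtxLabel_top_eq (c : ℕ) (t : List ℕ) (hc : 1 ≤ c) (ht : ∀ x ∈ t, 1 ≤ x)
    (hs : 2 ≤ (c :: t).sum) (p q : ℕ) (hq : 0 < q) (hcop : Nat.Coprime p q)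
    (hval : cf (c :: t) = (p : ℚ) / q) :
    vtxLabel (c :: t) ((c :: t).sum) = (p, q) := by
  have hall : ∀ x ∈ c :: t, 1 ≤ x := by
    intro x hx
    rcases List.mem_cons.mp hx with rfl | hx
    · exact hc
    · exact ht x hx
  have hK1 : 1 ≤ (K (c :: t)).1 := K_pos _ hall
  have hcf := cf_eq_K (c :: t) hall
  rw [hval] at hcf
  have hcross : p * (K (c :: t)).1 = (K (c :: t)).2 * q := by
    have hq' : (0:ℚ) < (q : ℚ) := by exact_mod_cast hq
    have hK1' : (0:ℚ) < ((K (c :: t)).1 : ℚ) := by exact_mod_cast hK1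
    rw [div_eq_div_iff (ne_of_gt hq') (ne_of_gt hK1')] at hcf
    exact_mod_cast hcf
  have hqK : q ∣ (K (c :: t)).1 := by
    apply (hcop.symm).dvd_of_dvd_mul_left
    exact ⟨(K (c :: t)).2, by rw [hcross]; exact Nat.mul_comm _ _⟩
  have hKq : (K (c :: t)).1 ∣ q := by
    apply (K_coprime (c :: t)).dvd_of_dvd_mul_left
    exact ⟨p, by rw [← hcross]; exact Nat.mul_comm _ _⟩
  have hK1q : (K (c :: t)).1 = q := Nat.dvd_antisymm hKq hqK
  have hK2p : (K (c :: t)).2 = p := by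
    rw [hK1q] at hcross
    exact (Nat.eq_of_mul_eq_mul_right hq hcross.symm)
  rw [vtxLabel_top c t hc ht hs, hK1q, hK2p]

end TopLabel


section MainAux

lemma chain'_map_mem {α β : Type*} {R : α → α → Prop} {S : β → β → Prop} (f : α → β) :
    ∀ {l : List α}, List.Chain' R l →
      (∀ u w, u ∈ l → w ∈ l → R u w → S (f u) (f w)) → List.Chain' S (l.map f) := by
  intro l
  induction l with
  | nil => intro _ _; exact List.isChain_nil
  | cons c t ih =>
    intro hch h
    cases t with
    | nil => exact List.isChain_singleton _
    | cons d t' =>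
      rw [List.map_cons, List.map_cons]
      refine List.isChain_cons_cons.mpr ⟨?_, ?_⟩
      · exact h c d (by simp) (by simp) hch.rel_head
      · have := ih hch.tail (fun u w hu hw => h u w (by simp [hu]) (by simp [hw]))
        exact this

lemma mem_map_sw {x y : ℕ} {Z : List (ℕ × ℕ)} :
    (sw x, sw y) ∈ Z.map (Prod.map sw sw) ↔ (x, y) ∈ Z := by
  rw [List.mem_map]
  constructor
  · rintro ⟨⟨x', y'⟩, hmem, heq⟩
    simp only [Prod.map, Prod.mk.injEq] at heq
    obtain ⟨h1, h2⟩ := heq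
    rw [← sw_inj h1, ← sw_inj h2]
    exact hmem
  · intro h
    exact ⟨(x, y), h, rfl⟩

lemma onPath_map_sw (γ : List ℕ) (u w : ℕ) :
    onPath (γ.map sw) (sw u) (sw w) ↔ onPath γ u w := by
  unfold onPath
  rw [← List.map_tail, List.zip_map, mem_map_sw, mem_map_sw]

lemma onPath_comm (γ : List ℕ) (u w : ℕ) : onPath γ u w ↔ onPath γ w u := by
  unfold onPath
  exact or_comm

lemma ell_le_sum (b : List ℕ) (k : ℕ) : ell b k ≤ b.sum := by
  rcases le_or_gt k b.length with h | h
  · have := ell_mono b h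
    rwa [ell_length] at this
  · unfold ell
    rw [List.take_of_length_le (by omega)]

lemma tsgn_one (b δ : List ℕ) :
    tsgn b δ 1 = if par2 b b.sum = (1, 1) then -1 else 1 := rfl

lemma tsgn_add_two (b δ : List ℕ) (k : ℕ) :
    tsgn b δ (k + 2) = (if bottomEdgeOn b δ (k + 2) then -1 else 1) * tsgn b δ (k + 1) := rfl

end MainAux

/-- **Corollary (signs of the mirror image).**  Let `p/q = [a₁,…,aₙ]` be an irreducible
fraction with `0 < p/q < 1`, `q` odd, and `a₁ ≥ 2`, so that
`(q−p)/q = [1, a₁−1, a₂,…,aₙ]`.  Let `t₁,…,tₙ` be the signs defined from `AT(p/q)` (via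
its Seifert path `γ`) and `t′₁,…,t′_{n+1}` the signs defined from `AT((q−p)/q)` (via its
Seifert path `γ′`).  Then `t′_{i+1} = −t_i` for every `1 ≤ i ≤ n`. -/
theorem mirror_signs (a1 : ℕ) (rest : List ℕ) (p q : ℕ)
    (h2 : 2 ≤ a1) (hpos : ∀ x ∈ rest, 0 < x)
    (hp : 0 < p) (hlt : p < q) (hcop : Nat.Coprime p q) (hq : q % 2 = 1)
    (hval : cf (a1 :: rest) = (p : ℚ) / q)
    (γ γ' : List ℕ) (hγ : IsSeifert (a1 :: rest) γ)
    (hγ' : IsSeifert (1 :: (a1 - 1) :: rest) γ') :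
    ∀ i, 1 ≤ i → i ≤ rest.length + 1 →
      tsgn (1 :: (a1 - 1) :: rest) γ' (i + 1) = -tsgn (a1 :: rest) γ i := by
  have hta : ∀ x ∈ rest, 1 ≤ x := hpos
  have hq0 : 0 < q := by omega
  have hsum' : (1 :: (a1 - 1) :: rest).sum = (a1 :: rest).sum := by simp; omega
  have hs2 : 2 ≤ (a1 :: rest).sum := by simp; omega
  have hs2' : 2 ≤ (1 :: (a1 - 1) :: rest).sum := by rw [hsum']; exact hs2
  have hTop : vtxLabel (a1 :: rest) (a1 :: rest).sum = (p, q) :=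
    vtxLabel_top_eq a1 rest (by omega) hta hs2 p q hq0 hcop hval
  have hcop' : Nat.Coprime (q - p) q := by
    have h1 : (q - p).Coprime (p + (q - p)) ↔ (q - p).Coprime p := Nat.coprime_add_self_right
    have h2' : p + (q - p) = q := by omega
    rw [h2'] at h1
    exact h1.mpr ((Nat.coprime_sub_self_left hlt.le).mpr hcop.symm)
  have htA' : ∀ x ∈ (a1 - 1) :: rest, 1 ≤ x := by
    intro x hx
    rcases List.mem_cons.mp hx with rfl | hx
    · omega
    · exact hta x hx
  have hp0 : (p:ℚ) ≠ 0 := Nat.cast_ne_zero.mpr (by omega)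
  have hq0' : (q:ℚ) ≠ 0 := Nat.cast_ne_zero.mpr (by omega)
  have hcrest0 : 0 ≤ cf rest := cf_nonneg rest hta
  have ha1q : (2:ℚ) ≤ (a1:ℚ) := by exact_mod_cast h2
  rw [show cf (a1 :: rest) = 1 / ((a1:ℚ) + cf rest) from rfl] at hval
  have hden : (0:ℚ) < (a1:ℚ) + cf rest := by linarith
  have hXval : (a1:ℚ) + cf rest = (q:ℚ) / (p:ℚ) := by
    rw [eq_div_iff hp0]
    rw [div_eq_div_iff (ne_of_gt hden) hq0'] at hval
    linarith [hval, mul_comm (p:ℚ) ((a1:ℚ) + cf rest)]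
  have hval' : cf (1 :: (a1 - 1) :: rest) = ((q - p : ℕ) : ℚ) / q := by
    rw [show cf (1 :: (a1 - 1) :: rest)
        = 1 / ((1:ℚ) + (1 / (((a1 - 1 : ℕ) : ℚ) + cf rest))) from rfl]
    have hc1 : ((a1 - 1 : ℕ) : ℚ) = (a1:ℚ) - 1 := by
      rw [Nat.cast_sub (by omega : 1 ≤ a1)]
      norm_num
    have hqp : ((q - p : ℕ) : ℚ) = (q:ℚ) - p := by
      rw [Nat.cast_sub hlt.le]
    have hltq : (p:ℚ) < (q:ℚ) := by exact_mod_cast hlt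
    have hXm : ((a1 - 1 : ℕ) : ℚ) + cf rest = ((q:ℚ) - p) / p := by
      rw [hc1]
      field_simp
      try linarith [hXval, mul_comm (p:ℚ) ((a1:ℚ) + cf rest),
        (eq_div_iff hp0).mp hXval]
    rw [hXm, hqp]
    have hqpne : (q:ℚ) - p ≠ 0 := by linarith
    field_simp
    try ring
    exact mul_inv_cancel₀ hq0'
  have hTop' : vtxLabel (1 :: (a1 - 1) :: rest) (1 :: (a1 - 1) :: rest).sum = (q - p, q) :=
    vtxLabel_top_eq 1 ((a1 - 1) :: rest) le_rfl htA' hs2' (q - p) q hq0 hcop' hval'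
  have hparA : par2 (a1 :: rest) (a1 :: rest).sum = (p % 2, 1) := by
    unfold par2
    rw [hTop, hq]
  have hparA' : par2 (1 :: (a1 - 1) :: rest) (1 :: (a1 - 1) :: rest).sum
      = ((q - p) % 2, 1) := by
    unfold par2
    rw [hTop', hq]
  obtain ⟨⟨hγh, hγl, hγs⟩, -, hγp⟩ := hγ
  obtain ⟨⟨hγ'h, hγ'l, hγ's⟩, -, hγ'p⟩ := hγ'
  have hbound : ∀ v ∈ γ, v ≤ (a1 :: rest).sum := chain_mem_le_head hγs hγh
  set γm := γ.map sw with hγm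
  have hmh : γm.head? = some ((1 :: (a1 - 1) :: rest).sum) := by
    rw [hγm, List.head?_map, hγh, hsum']
    simp only [Option.map_some]
    rw [sw_of_two_le hs2]
  have hml : γm.getLast? = some 0 ∨ γm.getLast? = some 1 := by
    rw [hγm, List.getLast?_map]
    rcases hγl with h | h <;> rw [h]
    · right; simp [sw]
    · left; simp [sw]
  have hms : List.Chain' (IsStep (1 :: (a1 - 1) :: rest)) γm :=
    chain'_map_mem sw hγs (fun u w hu _ hst => isStep_mirror h2 (hbound u hu) hst)
  have hγeq : γ' = γm := by
    rcases Nat.mod_two_eq_zero_or_one p with hp2 | hp2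
    · have htA : ¬ par2 (a1 :: rest) (a1 :: rest).sum = (1, 1) := by
        rw [hparA, hp2]; simp
      have htA'1 : par2 (1 :: (a1 - 1) :: rest) (1 :: (a1 - 1) :: rest).sum = (1, 1) := by
        rw [hparA']
        have : (q - p) % 2 = 1 := by omega
        rw [this]
      rw [SeifertParity, if_neg htA] at hγp
      rw [SeifertParity, if_pos htA'1] at hγ'p
      have hmq : List.Chain' (fun u w =>
          (par2 (1 :: (a1 - 1) :: rest) u = (1, 1) ∧ par2 (1 :: (a1 - 1) :: rest) w = (1, 0)) ∨
          (par2 (1 :: (a1 - 1) :: rest) u = (1, 0) ∧ par2 (1 :: (a1 - 1) :: rest) w = (1, 1))) γm := by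
        apply chain'_map_mem sw hγp
        intro u w hu hw hrel
        have hu' := par2_mirror h2 (hbound u hu)
        have hw' := par2_mirror h2 (hbound w hw)
        rcases hrel with ⟨h1, h2'⟩ | ⟨h1, h2'⟩
        · left; constructor <;> simp [hu', hw', h1, h2']
        · right; constructor <;> simp [hu', hw', h1, h2']
      exact path_unique (fun x y z hxy hxz => by
          rcases hxy with ⟨ha, hb⟩ | ⟨ha, hb⟩ <;> rcases hxz with ⟨hc, hd⟩ | ⟨hc, hd⟩ <;>
            simp_all)
        γ' γm _ hγ'h hmh hγ'l hml hγ's hms hγ'p hmq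
    · have htA : par2 (a1 :: rest) (a1 :: rest).sum = (1, 1) := by
        rw [hparA, hp2]
      have htA'1 : ¬ par2 (1 :: (a1 - 1) :: rest) (1 :: (a1 - 1) :: rest).sum = (1, 1) := by
        rw [hparA']
        have : (q - p) % 2 = 0 := by omega
        rw [this]; simp
      rw [SeifertParity, if_pos htA] at hγp
      rw [SeifertParity, if_neg htA'1] at hγ'p
      have hmq : List.Chain' (fun u w =>
          (par2 (1 :: (a1 - 1) :: rest) u = (0, 1) ∧ par2 (1 :: (a1 - 1) :: rest) w = (1, 0)) ∨
          (par2 (1 :: (a1 - 1) :: rest) u = (1, 0) ∧ par2 (1 :: (a1 - 1) :: rest) w = (0, 1))) γm := by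
        apply chain'_map_mem sw hγp
        intro u w hu hw hrel
        have hu' := par2_mirror h2 (hbound u hu)
        have hw' := par2_mirror h2 (hbound w hw)
        rcases hrel with ⟨h1, h2'⟩ | ⟨h1, h2'⟩
        · left; constructor <;> simp [hu', hw', h1, h2']
        · right; constructor <;> simp [hu', hw', h1, h2']
      exact path_unique (fun x y z hxy hxz => by
          rcases hxy with ⟨ha, hb⟩ | ⟨ha, hb⟩ <;> rcases hxz with ⟨hc, hd⟩ | ⟨hc, hd⟩ <;>
            simp_all)
        γ' γm _ hγ'h hmh hγ'l hml hγ's hms hγ'p hmq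
  intro i hi
  induction i, hi using Nat.le_induction with
  | base =>
    intro _
    have hnb : ¬ bottomEdgeOn (1 :: (a1 - 1) :: rest) γ' 2 := by
      unfold bottomEdgeOn
      have h0 : (((1 : ℕ) :: (a1 - 1) :: rest).take (2 - 1)).sum - 1 = 0 := by simp
      rw [h0]
      have hle := edgeIdx_le (1 :: (a1 - 1) :: rest) 0
      intro hcon
      rcases hcon with hcon | hcon
      · exact not_isStep_of_le_one (by omega) (chain'_rel_of_zip hγ's hcon)
      · exact not_isStep_of_le_one (by omega) (chain'_rel_of_zip hγ's hcon)
    rw [show (1 : ℕ) + 1 = 0 + 2 from rfl, tsgn_add_two, if_neg (by simpa using hnb), one_mul,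
      tsgn_one, tsgn_one, hparA, hparA']
    rcases Nat.mod_two_eq_zero_or_one p with hp2 | hp2
    · have hqp2 : (q - p) % 2 = 1 := by omega
      rw [hp2, hqp2, if_pos rfl, if_neg (by simp)]
      try norm_num
    · have hqp2 : (q - p) % 2 = 0 := by omega
      rw [hp2, hqp2, if_neg (by simp), if_pos rfl]
      try norm_num
  | succ i hi ih =>
    intro hin
    obtain ⟨j, rfl⟩ : ∃ j, i = j + 1 := ⟨i - 1, by omega⟩
    have htake : ((1 :: (a1 - 1) :: rest).take (j + 2)).sum
        = ((a1 :: rest).take (j + 1)).sum := by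
      simp [List.take_succ_cons]
      omega
    have hjlen : j + 1 < (a1 :: rest).length := by simp; omega
    have hmb : ((a1 :: rest).take (j + 1)).sum - 1 ≤ (a1 :: rest).sum - 2 := by
      have hss : (List.take (j + 2) (a1 :: rest)).sum
          = (List.take (j + 1) (a1 :: rest)).sum + (a1 :: rest)[j + 1] :=
        List.sum_take_succ (a1 :: rest) (j + 1) hjlen
      have h1 : 1 ≤ (a1 :: rest)[j + 1] := by
        rw [List.getElem_cons_succ]
        exact hta _ (List.getElem_mem _)
      have h2' : ((a1 :: rest).take (j + 2)).sum ≤ (a1 :: rest).sum := by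
        have := ell_le_sum (a1 :: rest) (j + 2)
        simpa [ell] using this
      omega
    have hbeq : bottomEdgeOn (1 :: (a1 - 1) :: rest) γ' (j + 3)
        ↔ bottomEdgeOn (a1 :: rest) γ (j + 2) := by
      unfold bottomEdgeOn
      rw [show j + 3 - 1 = j + 2 from rfl, show j + 2 - 1 = j + 1 from rfl, htake,
        edgeIdx_mirror h2 hmb, hγeq, hγm]
      rw [onPath_map_sw]
      exact onPath_comm _ _ _
    have hkey : tsgn (1 :: (a1 - 1) :: rest) γ' (j + 3)
        = (if bottomEdgeOn (a1 :: rest) γ (j + 2) then (-1 : ℤ) else 1)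
          * tsgn (1 :: (a1 - 1) :: rest) γ' (j + 2) := by
      rw [show j + 3 = (j + 1) + 2 from rfl, tsgn_add_two]
      rw [if_congr (by simpa using hbeq) rfl rfl]
    rw [show (j + 1) + 1 + 1 = j + 3 from rfl, hkey, ih (by omega),
      show j + 1 + 1 = j + 2 from rfl, tsgn_add_two]
    ring

end TwoBridge

end
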